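/- Let A : Δᵒᵖ → Set be a simplicial set satisfying the Segal condition (all Segal maps S_k : A_k → A_1 ×_{A_0} ⋯ ×_{A_0} A_1 are bijections for k ≥ 0). Then the data (A_0, A_1, s, t) together with the composition A_1 ×_{A_0} A_1 ≅ A_2 → A_1 (via the inverse of S_2 followed by the face map A(d_1)) and identities given by the degeneracy A_0 → A_1 forms a category: composition is associative and unital. -/

import Mathlib

/-!
STATEMENT 17: Let `A : Δᵒᵖ ⥤ Set` be a simplicial set satisfying the Segal condition
(all Segal maps `S_k : A_k ⟶ A_1 ×_{A_0} ⋯ ×_{A_0} A_1` — realised as the spine maps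
`A.spine k` — are bijections).  Then the data `(A_0, A_1, s, t)`, together with the
composition `A_1 ×_{A_0} A_1 ≅ A_2 ⟶ A_1` (given by the inverse of `S_2` followed by
the face map `A(d_1)`) and identities given by the degeneracy `A_0 → A_1`, forms a
category: composition has the expected sources and targets and is associative and
unital.
-/

open CategoryTheory Simplicial

universe u

namespace SegalStmt

variable (A : SSet.{u})

/-- The source of a `1`-simplex: the face `d₁`. -/
def src : A _⦋1⦌ → A _⦋0⦌ := A.map (SimplexCategory.δ (1 : Fin 2)).op

/-- The target of a `1`-simplex: the face `d₀`. -/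
def tgt : A _⦋1⦌ → A _⦋0⦌ := A.map (SimplexCategory.δ (0 : Fin 2)).op

/-- The identity on a `0`-simplex: the degeneracy `s₀`. -/
def ide : A _⦋0⦌ → A _⦋1⦌ := A.map (SimplexCategory.σ (0 : Fin 1)).op

open SimplexCategory SSet SSet.StrictSegal

set_option linter.unreachableTactic false
set_option linter.unusedTactic false
set_option linter.unnecessarySeqFocus false

theorem segal_implies_category
    (hA : ∀ k : ℕ, Function.Bijective (A.spine k)) :
    ∃ comp : ∀ f g : A _⦋1⦌, tgt A f = src A g → A _⦋1⦌,
      -- `comp f g` is `d₁` of the (unique) `2`-simplex whose spine is `(f, g)`,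
      -- i.e. it is obtained from `(f, g)` via the inverse of the Segal map `S₂`
      -- followed by the face map `d₁`:
      (∀ (f g : A _⦋1⦌) (h : tgt A f = src A g), ∃ σ₂ : A _⦋2⦌,
          A.map (SimplexCategory.δ (2 : Fin 3)).op σ₂ = f ∧
          A.map (SimplexCategory.δ (0 : Fin 3)).op σ₂ = g ∧
          A.map (SimplexCategory.δ (1 : Fin 3)).op σ₂ = comp f g h) ∧
      -- sources and targets of composites:
      (∀ (f g : A _⦋1⦌) (h : tgt A f = src A g),
          src A (comp f g h) = src A f ∧ tgt A (comp f g h) = tgt A g) ∧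
      -- sources and targets of identities:
      (∀ a : A _⦋0⦌, src A (ide A a) = a ∧ tgt A (ide A a) = a) ∧
      -- left unit law:
      (∀ (f : A _⦋1⦌) (h : tgt A (ide A (src A f)) = src A f),
          comp (ide A (src A f)) f h = f) ∧
      -- right unit law:
      (∀ (f : A _⦋1⦌) (h : tgt A f = src A (ide A (tgt A f))),
          comp f (ide A (tgt A f)) h = f) ∧
      -- associativity:
      (∀ (f g h : A _⦋1⦌) (hfg : tgt A f = src A g) (hgh : tgt A g = src A h)
          (h₁ : tgt A (comp f g hfg) = src A h) (h₂ : tgt A f = src A (comp g h hgh)),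
          comp (comp f g hfg) h h₁ = comp f (comp g h hgh) h₂) := by
  let sx : StrictSegal A :=
    { spineToSimplex := fun {n} p => (Equiv.ofBijective _ (hA n)).symm p
      spine_spineToSimplex := fun n => funext fun p => (Equiv.ofBijective _ (hA n)).apply_symm_apply p
      spineToSimplex_spine := fun n => funext fun x => (Equiv.ofBijective _ (hA n)).symm_apply_apply x }
  -- helper SimplexCategory identities
  have hd2 : SimplexCategory.δ (2 : Fin 3) = mkOfSucc (0 : Fin 2) := by
    apply SimplexCategory.Hom.ext; ext i; fin_cases i <;> rfl
  have hd0 : SimplexCategory.δ (0 : Fin 3) = mkOfSucc (1 : Fin 2) := by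
    apply SimplexCategory.Hom.ext; ext i; fin_cases i <;> rfl
  have hc0 : SimplexCategory.δ (1 : Fin 2) = SimplexCategory.const ⦋0⦌ ⦋1⦌ 0 := by
    apply SimplexCategory.Hom.ext; ext i; fin_cases i <;> rfl
  have hc1 : SimplexCategory.δ (0 : Fin 2) = SimplexCategory.const ⦋0⦌ ⦋1⦌ 1 := by
    apply SimplexCategory.Hom.ext; ext i; fin_cases i <;> rfl
  have hdiag : SimplexCategory.diag 2 = SimplexCategory.δ (1 : Fin 3) := by
    apply SimplexCategory.Hom.ext; ext i; fin_cases i <;> rfl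
  -- the 2-path determined by a composable pair
  have vsrc : ∀ f : A _⦋1⦌, A.δ (1 : Fin 2) f = src A f := fun _ => rfl
  have vtgt : ∀ f : A _⦋1⦌, A.δ (0 : Fin 2) f = tgt A f := fun _ => rfl
  let path2 : ∀ (f g : A _⦋1⦌), tgt A f = src A g → Path A 2 := fun f g h =>
    { vertex := ![src A f, src A g, tgt A g]
      arrow := ![f, g]
      arrow_src := by intro i; fin_cases i <;> simp [vsrc, h] <;> rfl
      arrow_tgt := by intro i; fin_cases i; exacts [h, rfl] }
  let comp : ∀ f g : A _⦋1⦌, tgt A f = src A g → A _⦋1⦌ := fun f g h =>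
    A.δ (1 : Fin 3) (sx.spineToSimplex (path2 f g h))
  -- if a 2-simplex has spine (f,g) then its d₁ face is comp f g
  have comp_eq : ∀ (f g : A _⦋1⦌) (h : tgt A f = src A g) (x : A _⦋2⦌),
      A.spine 2 x = path2 f g h → comp f g h = A.δ (1 : Fin 3) x := by
    intro f g h x hx
    show A.δ (1 : Fin 3) (sx.spineToSimplex (path2 f g h)) = _
    rw [← hx, sx.spineToSimplex_spine_apply]
  refine ⟨comp, ?_, ?_, ?_, ?_, ?_, ?_⟩
  · -- existence of the filling 2-simplex
    intro f g h
    refine ⟨sx.spineToSimplex (path2 f g h), ?_, ?_, rfl⟩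
    · rw [hd2, sx.spineToSimplex_arrow]; rfl
    · rw [hd0, sx.spineToSimplex_arrow]; rfl
  · -- sources and targets of composites
    intro f g h
    constructor
    · show A.map (SimplexCategory.δ (1 : Fin 2)).op (A.δ (1 : Fin 3) _) = _
      rw [hc0, ← spine_vertex]
      rw [sx.spine_δ_vertex_lt (j := (1 : Fin 3)) (path2 f g h) (by decide)]
      rfl
    · show A.map (SimplexCategory.δ (0 : Fin 2)).op (A.δ (1 : Fin 3) _) = _
      rw [hc1, ← spine_vertex]
      rw [sx.spine_δ_vertex_ge (j := (1 : Fin 3)) (path2 f g h) (by decide)]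
      rfl
  · -- sources and targets of identities
    intro a
    constructor
    · exact A.δ_comp_σ_succ_apply 0 a
    · exact A.δ_comp_σ_self_apply 0 a
  · -- left unit
    intro f h
    have hs : A.spine 2 (A.σ (0 : Fin 2) f) = path2 (ide A (src A f)) f h := by
      apply Path.ext'
      intro i
      fin_cases i
      · show A.map (mkOfSucc (0 : Fin 2)).op (A.map (SimplexCategory.σ (0 : Fin 2)).op f) = _
        rw [← FunctorToTypes.map_comp_apply, ← op_comp]
        have : mkOfSucc (0 : Fin 2) ≫ SimplexCategory.σ (0 : Fin 2) =
            SimplexCategory.σ (0 : Fin 1) ≫ SimplexCategory.δ (1 : Fin 2) := by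
          apply SimplexCategory.Hom.ext; ext i; fin_cases i <;> rfl
        rw [this, op_comp, FunctorToTypes.map_comp_apply]
        rfl
      · show A.map (mkOfSucc (1 : Fin 2)).op (A.map (SimplexCategory.σ (0 : Fin 2)).op f) = _
        rw [← FunctorToTypes.map_comp_apply, ← op_comp]
        have : mkOfSucc (1 : Fin 2) ≫ SimplexCategory.σ (0 : Fin 2) = 𝟙 _ := by
          apply SimplexCategory.Hom.ext; ext i; fin_cases i <;> rfl
        rw [this]
        simp
        rfl
    rw [comp_eq _ _ h _ hs]
    exact A.δ_comp_σ_succ_apply 0 f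
  · -- right unit
    intro f h
    have hs : A.spine 2 (A.σ (1 : Fin 2) f) = path2 f (ide A (tgt A f)) h := by
      apply Path.ext'
      intro i
      fin_cases i
      · show A.map (mkOfSucc (0 : Fin 2)).op (A.map (SimplexCategory.σ (1 : Fin 2)).op f) = _
        rw [← FunctorToTypes.map_comp_apply, ← op_comp]
        have : mkOfSucc (0 : Fin 2) ≫ SimplexCategory.σ (1 : Fin 2) = 𝟙 _ := by
          apply SimplexCategory.Hom.ext; ext i; fin_cases i <;> rfl
        rw [this]
        simp
        rfl
      · show A.map (mkOfSucc (1 : Fin 2)).op (A.map (SimplexCategory.σ (1 : Fin 2)).op f) = _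
        rw [← FunctorToTypes.map_comp_apply, ← op_comp]
        have : mkOfSucc (1 : Fin 2) ≫ SimplexCategory.σ (1 : Fin 2) =
            SimplexCategory.σ (0 : Fin 1) ≫ SimplexCategory.δ (0 : Fin 2) := by
          apply SimplexCategory.Hom.ext; ext i; fin_cases i <;> rfl
        rw [this, op_comp, FunctorToTypes.map_comp_apply]
        rfl
    rw [comp_eq _ _ h _ hs]
    exact A.δ_comp_σ_self_apply 1 f
  · -- associativity
    intro f g h hfg hgh h₁ h₂
    let p3 : Path A 3 :=
      { vertex := ![src A f, src A g, src A h, tgt A h]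
        arrow := ![f, g, h]
        arrow_src := by intro i; fin_cases i <;> simp [vsrc, hfg, hgh] <;> rfl
        arrow_tgt := by intro i; fin_cases i; exacts [hfg, hgh, rfl] }
    let τ : A _⦋3⦌ := sx.spineToSimplex p3
    -- comp f g = diagonal of the front interval
    have hfg' : comp f g hfg = sx.spineToDiagonal (Path.interval p3 0 2 (by omega)) := by
      have : Path.interval p3 0 2 (by omega) = path2 f g hfg := by
        apply Path.ext'
        intro i
        fin_cases i <;> rfl
      rw [this]
      show _ = A.map (SimplexCategory.diag 2).op _
      rw [hdiag]
      rfl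
    have hgh' : comp g h hgh = sx.spineToDiagonal (Path.interval p3 1 2 (by omega)) := by
      have : Path.interval p3 1 2 (by omega) = path2 g h hgh := by
        apply Path.ext'
        intro i
        fin_cases i <;> rfl
      rw [this]
      show _ = A.map (SimplexCategory.diag 2).op _
      rw [hdiag]
      rfl
    have e1 : A.spine 2 (A.δ (1 : Fin 4) τ) = path2 (comp f g hfg) h h₁ := by
      apply Path.ext'
      intro i
      fin_cases i
      · rw [sx.spine_δ_arrow_eq (j := (1 : Fin 4)) p3 (by decide)]
        exact hfg'.symm
      · rw [sx.spine_δ_arrow_gt (j := (1 : Fin 4)) p3 (by decide)]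
        rfl
    have e2 : A.spine 2 (A.δ (2 : Fin 4) τ) = path2 f (comp g h hgh) h₂ := by
      apply Path.ext'
      intro i
      fin_cases i
      · rw [sx.spine_δ_arrow_lt (j := (2 : Fin 4)) p3 (by decide)]
        rfl
      · rw [sx.spine_δ_arrow_eq (j := (2 : Fin 4)) p3 (by decide)]
        exact hgh'.symm
    rw [comp_eq _ _ h₁ _ e1, comp_eq _ _ h₂ _ e2]
    exact (A.δ_comp_δ_apply (i := (1 : Fin 3)) (j := (1 : Fin 3)) le_rfl τ).symm

end SegalStmt
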